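/- Suppose f ∈ C²(ℝ^d) with ‖∇²f(x)‖ ≤ M for all x, 0 < α ≤ 1/M, f(0) = 0 and ∇f(0) = 0. Let σ > 0 and let ρ ∈ (0,1) satisfy ρM + Mρ²/2 < (ασ²/(2d))(1−ρ)². Let x ∈ ℝ^d satisfy ‖∇f(x)‖ ≥ σ‖x‖, and suppose there exists x' ≠ 0 with f(x') = 0 and ‖x − x'‖ < ρ‖x'‖. Then for every coordinate index i with |e_iᵀ ∇f(x)| ≥ (1/√d) ‖∇f(x)‖, it holds that f(x − α e_i ∂_i f(x)) < 0. -/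

import Mathlib

open Filter Topology RealInnerProductSpace

noncomputable section

variable {d : ℕ}

local notation "E" => EuclideanSpace ℝ (Fin d)

lemma grad_contDiff {f : E → ℝ} (hf : ContDiff ℝ 2 f) : ContDiff ℝ 1 (gradient f) := by
  have h := hf.fderiv_right (m := 1) (by norm_num)
  exact (InnerProductSpace.toDual ℝ E).symm.contDiff.comp h

lemma fderiv_apply_grad {f : E → ℝ} (hf : ContDiff ℝ 2 f) (y v : E) :
    fderiv ℝ f y v = ⟪gradient f y, v⟫ := by
  have hdiff : DifferentiableAt ℝ f y := (hf.differentiable (by norm_num)).differentiableAt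
  have := hdiff.hasGradientAt
  rw [hasGradientAt_iff_hasFDerivAt] at this
  rw [this.fderiv]
  simp [InnerProductSpace.toDual_apply_apply]

lemma grad_lip {f : E → ℝ} {M : ℝ} (hf : ContDiff ℝ 2 f)
    (hM : ∀ x : E, ‖fderiv ℝ (gradient f) x‖ ≤ M) (y z : E) :
    ‖gradient f y - gradient f z‖ ≤ M * ‖y - z‖ := by
  exact Convex.norm_image_sub_le_of_norm_fderiv_le
    (fun u _ => ((grad_contDiff hf).differentiable one_ne_zero).differentiableAt)
    (fun u _ => hM u) convex_univ (Set.mem_univ z) (Set.mem_univ y)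

lemma descent {f : E → ℝ} {M : ℝ} (hf : ContDiff ℝ 2 f)
    (hM : ∀ x : E, ‖fderiv ℝ (gradient f) x‖ ≤ M) (a v : E) :
    f (a + v) ≤ f a + ⟪gradient f a, v⟫ + M / 2 * ‖v‖ ^ 2 := by
  have hgc : Continuous (gradient f) := (grad_contDiff hf).continuous
  have hderiv : ∀ t : ℝ, HasDerivAt (fun t : ℝ => f (a + t • v))
      ⟪gradient f (a + t • v), v⟫ t := by
    intro t
    have h1 : HasDerivAt (fun t : ℝ => a + t • v) v t := by
      simpa using ((hasDerivAt_id t).smul_const v).const_add a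
    have h2 : HasFDerivAt f (fderiv ℝ f (a + t • v)) (a + t • v) :=
      ((hf.differentiable (by norm_num)).differentiableAt).hasFDerivAt
    have := h2.comp_hasDerivAt t h1
    rw [fderiv_apply_grad hf] at this
    exact this
  have hcont : Continuous fun t : ℝ => ⟪gradient f (a + t • v), v⟫ := by
    exact (hgc.comp (continuous_const.add (continuous_id.smul continuous_const))).inner continuous_const
  have hint : ∫ t in (0:ℝ)..1, ⟪gradient f (a + t • v), v⟫ =
      f (a + v) - f a := by
    have := intervalIntegral.integral_eq_sub_of_hasDerivAt
      (f := fun t : ℝ => f (a + t • v)) (a := 0) (b := 1)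
      (fun t _ => hderiv t) (hcont.intervalIntegrable 0 1)
    simpa using this
  have hbound : ∀ t ∈ Set.Icc (0:ℝ) 1,
      ⟪gradient f (a + t • v), v⟫ ≤ ⟪gradient f a, v⟫ + (M * ‖v‖ ^ 2) * t := by
    intro t ht
    have h1 : ⟪gradient f (a + t • v) - gradient f a, v⟫ ≤
        ‖gradient f (a + t • v) - gradient f a‖ * ‖v‖ :=
      real_inner_le_norm _ _
    have h2 : ‖gradient f (a + t • v) - gradient f a‖ ≤ M * (t * ‖v‖) := by
      have := grad_lip hf hM (a + t • v) a
      simpa [norm_smul, abs_of_nonneg ht.1] using this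
    have h3 : ⟪gradient f (a + t • v) - gradient f a, v⟫ =
        ⟪gradient f (a + t • v), v⟫ - ⟪gradient f a, v⟫ := inner_sub_left _ _ _
    nlinarith [norm_nonneg v, mul_le_mul_of_nonneg_right h2 (norm_nonneg v)]
  have hmono : ∫ t in (0:ℝ)..1, ⟪gradient f (a + t • v), v⟫ ≤
      ∫ t in (0:ℝ)..1, (⟪gradient f a, v⟫ + (M * ‖v‖ ^ 2) * t) := by
    apply intervalIntegral.integral_mono_on (by norm_num)
      (hcont.intervalIntegrable 0 1)
      (((continuous_const.add (continuous_const.mul continuous_id)) : Continuous fun t : ℝ => ⟪gradient f a, v⟫ + (M * ‖v‖ ^ 2) * t).intervalIntegrable 0 1)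
    exact hbound
  have hrhs : ∫ t in (0:ℝ)..1, (⟪gradient f a, v⟫ + (M * ‖v‖ ^ 2) * t) =
      ⟪gradient f a, v⟫ + M / 2 * ‖v‖ ^ 2 := by
    rw [intervalIntegral.integral_add (intervalIntegrable_const)
      ((intervalIntegral.intervalIntegrable_id).const_mul _),
      intervalIntegral.integral_const_mul, integral_id]
    simp; ring
  linarith [hint ▸ hmono, hrhs ▸ hmono]

/-- The Hessian `∇²f(x)` of `f` at `x`, as a continuous linear map. -/
def hess (d : ℕ) (f : EuclideanSpace ℝ (Fin d) → ℝ) (x : EuclideanSpace ℝ (Fin d)) :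
    EuclideanSpace ℝ (Fin d) →L[ℝ] EuclideanSpace ℝ (Fin d) :=
  fderiv ℝ (gradient f) x

/-- Escape from the trap region: if `‖∇f(x)‖ ≥ σ‖x‖`, `x` is within distance `ρ‖x'‖` of some
`x' ≠ 0` with `f(x') = 0`, and the chosen coordinate satisfies
`|e_iᵀ∇f(x)| ≥ (1/√d)‖∇f(x)‖`, then `f(x − α e_i ∂_i f(x)) < 0`. -/
theorem rcgd_step_escapes_trap
    {d : ℕ} (hd : 1 ≤ d) (f : EuclideanSpace ℝ (Fin d) → ℝ) (M α : ℝ)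
    (hf : ContDiff ℝ 2 f)
    (hM : ∀ x, ‖hess d f x‖ ≤ M)
    (hα : 0 < α) (hα' : α ≤ 1 / M)
    (hf0 : f 0 = 0) (hcrit : gradient f 0 = 0)
    (σ ρ : ℝ) (hσ : 0 < σ) (hρ0 : 0 < ρ) (hρ1 : ρ < 1)
    (hρ : ρ * M + M * ρ ^ 2 / 2 < (α * σ ^ 2 / (2 * d)) * (1 - ρ) ^ 2)
    (x : EuclideanSpace ℝ (Fin d)) (hx : σ * ‖x‖ ≤ ‖gradient f x‖)
    (x' : EuclideanSpace ℝ (Fin d)) (hx'0 : x' ≠ 0) (hfx' : f x' = 0)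
    (hnear : ‖x - x'‖ < ρ * ‖x'‖)
    (i : Fin d) (hi : (1 / Real.sqrt d) * ‖gradient f x‖ ≤ |gradient f x i|) :
    f (x - (α * gradient f x i) • EuclideanSpace.single i (1 : ℝ)) < 0 := by
  have hM' : ∀ y : EuclideanSpace ℝ (Fin d), ‖fderiv ℝ (gradient f) y‖ ≤ M := hM
  have hMpos : 0 < M := by
    by_contra h
    push_neg at h
    have : (1:ℝ) / M ≤ 0 := one_div_nonpos.mpr h
    linarith
  have hMa : M * α ≤ 1 := by
    rw [le_div_iff₀ hMpos] at hα'
    linarith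
  have hd0 : (0:ℝ) < (d:ℝ) := by exact_mod_cast hd
  set g : EuclideanSpace ℝ (Fin d) := gradient f x with hg
  set gi : ℝ := gradient f x i with hgi
  set X : ℝ := ‖x‖ with hX
  set X' : ℝ := ‖x'‖ with hX'
  set G : ℝ := ‖g‖ with hG
  have hgieq : g i = gi := by rw [hgi, hg]
  clear_value g gi X X' G
  have hX'pos : 0 < X' := by rw [hX']; exact norm_pos_iff.mpr hx'0
  -- step bound
  set w : EuclideanSpace ℝ (Fin d) := (-(α * gi)) • EuclideanSpace.single i (1:ℝ) with hw
  have hgoal_eq : x - (α * gi) • EuclideanSpace.single i (1:ℝ) = x + w := by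
    rw [hw, neg_smul, ← sub_eq_add_neg]
  have hinner_w : ⟪g, w⟫ = -(α * gi) * gi := by
    rw [hw, real_inner_smul_right]
    congr 1
    have := EuclideanSpace.inner_single_right (𝕜 := ℝ) i (1:ℝ) g
    rw [hgieq] at this
    simpa using this
  have hnorm_w : ‖w‖ ^ 2 = α ^ 2 * gi ^ 2 := by
    have h : ‖w‖ = |α * gi| := by rw [hw, norm_smul]; simp [abs_mul]
    rw [h, sq_abs, mul_pow]
  have h1 : f (x + w) ≤ f x + ⟪g, w⟫ + M / 2 * ‖w‖ ^ 2 := by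
    have h := descent hf hM' x w
    rwa [← hg] at h
  have hB : f (x + w) ≤ f x - α / 2 * gi ^ 2 := by
    rw [hinner_w, hnorm_w] at h1
    have t : M * α * (α * gi ^ 2) ≤ 1 * (α * gi ^ 2) :=
      mul_le_mul_of_nonneg_right hMa (by positivity)
    linarith
  -- bound on f x
  have h2 : f x ≤ f x' + ⟪gradient f x', x - x'⟫ + M / 2 * ‖x - x'‖ ^ 2 := by
    have h := descent hf hM' x' (x - x')
    have e : x' + (x - x') = x := by abel
    rwa [e] at h
  have hgx' : ‖gradient f x'‖ ≤ M * X' := by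
    have h := grad_lip hf hM' x' 0
    rw [hX']
    simpa [hcrit] using h
  have hinner_x' : ⟪gradient f x', x - x'⟫ ≤ M * X' * ‖x - x'‖ :=
    le_trans (real_inner_le_norm _ _)
      (mul_le_mul_of_nonneg_right hgx' (norm_nonneg _))
  have hA : f x ≤ ρ * M * X' ^ 2 + M / 2 * ρ ^ 2 * X' ^ 2 := by
    have hnn : (0:ℝ) ≤ ‖x - x'‖ := norm_nonneg _
    have t1 : M * X' * ‖x - x'‖ ≤ M * X' * (ρ * X') :=
      mul_le_mul_of_nonneg_left hnear.le (by positivity)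
    have t2 : ‖x - x'‖ ^ 2 ≤ (ρ * X') ^ 2 := by
      apply pow_le_pow_left₀ hnn hnear.le
    have t3 : M / 2 * ‖x - x'‖ ^ 2 ≤ M / 2 * (ρ * X') ^ 2 :=
      mul_le_mul_of_nonneg_left t2 (by positivity)
    have hfx : f x ≤ f x' + ⟪gradient f x', x - x'⟫ + M / 2 * ‖x - x'‖ ^ 2 := h2
    rw [hfx'] at hfx
    have e : M / 2 * (ρ * X') ^ 2 = M / 2 * ρ ^ 2 * X' ^ 2 := by ring
    have e2 : M * X' * (ρ * X') = ρ * M * X' ^ 2 := by ring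
    linarith [hinner_x']
  -- lower bound on gi^2
  have hgisq : G ^ 2 / d ≤ gi ^ 2 := by
    have hs : Real.sqrt d > 0 := Real.sqrt_pos.mpr hd0
    have hGnn : 0 ≤ G := by rw [hG]; exact norm_nonneg _
    have h0 : 0 ≤ (1 / Real.sqrt d) * G := mul_nonneg (by positivity) hGnn
    have h1 := mul_self_le_mul_self h0 hi
    have hd' : Real.sqrt d * Real.sqrt d = (d:ℝ) := Real.mul_self_sqrt hd0.le
    rw [abs_mul_abs_self] at h1
    have e : (1 / Real.sqrt d * G) * (1 / Real.sqrt d * G) = G ^ 2 / d := by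
      rw [← hd']; field_simp; rw [Real.sqrt_sq hs.le]
    rw [e] at h1
    linarith
  have hXnn : 0 ≤ X := by rw [hX]; exact norm_nonneg _
  have hGsq : σ ^ 2 * X ^ 2 ≤ G ^ 2 := by
    have h0 : 0 ≤ σ * X := mul_nonneg hσ.le hXnn
    have h1 := mul_self_le_mul_self h0 hx
    linarith [h1]
  have hXlow : (1 - ρ) * X' < X := by
    have htri : X' - X ≤ ‖x - x'‖ := by
      have h := norm_sub_norm_le x' x
      rw [norm_sub_rev, ← hX', ← hX] at h
      linarith
    linarith
  have hXsq : (1 - ρ) ^ 2 * X' ^ 2 < X ^ 2 := by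
    have h0 : 0 ≤ (1 - ρ) * X' := mul_nonneg (by linarith) hX'pos.le
    have h1 := mul_self_lt_mul_self h0 hXlow
    linarith [h1]
  -- chain
  have hc1 : α * σ ^ 2 / (2 * d) * X ^ 2 ≤ α / 2 * gi ^ 2 := by
    rw [div_le_iff₀ hd0] at hgisq
    have e1 : α * σ ^ 2 / (2 * d) * X ^ 2 = (α / (2 * d)) * (σ ^ 2 * X ^ 2) := by
      field_simp
    have e2 : (α / (2 * d)) * (σ ^ 2 * X ^ 2) ≤ (α / (2 * d)) * G ^ 2 :=
      mul_le_mul_of_nonneg_left hGsq (by positivity)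
    have e3 : (α / (2 * d)) * G ^ 2 ≤ (α / (2 * d)) * (gi ^ 2 * (d:ℝ)) :=
      mul_le_mul_of_nonneg_left hgisq (by positivity)
    have e4 : (α / (2 * d)) * (gi ^ 2 * (d:ℝ)) = α / 2 * gi ^ 2 := by
      field_simp
    linarith
  have hc2 : (α * σ ^ 2 / (2 * d)) * ((1 - ρ) ^ 2 * X' ^ 2) < α * σ ^ 2 / (2 * d) * X ^ 2 :=
    mul_lt_mul_of_pos_left hXsq (by positivity)
  have hc3 : (ρ * M + M * ρ ^ 2 / 2) * X' ^ 2 < (α * σ ^ 2 / (2 * d)) * ((1 - ρ) ^ 2 * X' ^ 2) := by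
    have := mul_lt_mul_of_pos_right hρ (by positivity : (0:ℝ) < X' ^ 2)
    linarith [this]
  rw [hgoal_eq]
  linarith [hB, hA, hc1, hc2, hc3]
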